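/- Let {Ψ(z) : z ∈ ℂ₊} be an analytic family of bounded operators on L²(M, μ) with ‖Ψ(z)‖_{2→2} ≤ 1 on ℂ₊. If for some C ≥ 1 and a > 0 one has |⟨Ψ(t)f₁, f₂⟩| ≤ C·e^{at}·e^{-r²/(4t)}·‖f₁‖₂‖f₂‖₂ for all t > 0 and f₁, f₂ supported in balls at mutual distance r, then in fact |⟨Ψ(t)f₁, f₂⟩| ≤ e^{-r²/(4t)}·‖f₁‖₂‖f₂‖₂, i.e. the Davies-Gaffney estimate holds with constant 1 and no exponential growth factor. -/

import Mathlib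

open MeasureTheory

/-- Distance between two subsets of a metric space. -/
noncomputable def setDist {M : Type*} [PseudoMetricSpace M] (U₁ U₂ : Set M) : ℝ :=
  sInf ((fun q : M × M => dist q.1 q.2) '' (U₁ ×ˢ U₂))

section ScalarPL

open Complex Filter

lemma scalarPL {F : ℂ → ℂ} {γ C₀ : ℝ} (hγ : 0 < γ)
    (hd : DifferentiableOn ℂ F {z : ℂ | 0 < z.re})
    (hb : ∀ z : ℂ, 0 < z.re → ‖F z‖ ≤ 1)
    (hr : ∀ t : ℝ, 0 < t → ‖F (t : ℂ)‖ ≤ C₀ * Real.exp (-γ / t)) :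
    ∀ t : ℝ, 0 < t → ‖F (t : ℂ)‖ ≤ Real.exp (-γ / t) := by
  intro t ht
  have key : ∀ δ : ℝ, 0 < δ → δ ≤ 1 / t →
      ‖F (t : ℂ)‖ * Real.exp (γ / t) ≤ Real.exp (γ * δ) := by
    intro δ hδ hδt
    set f : ℂ → ℂ := fun w => F (((δ : ℂ) + w)⁻¹) * Complex.exp ((γ : ℂ) * ((δ : ℂ) + w)) with hf
    have hne : ∀ w : ℂ, -δ < w.re → ((δ : ℂ) + w) ≠ 0 := by
      intro w hw h
      have : ((δ : ℂ) + w).re = 0 := by rw [h]; simp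
      simp only [Complex.add_re, Complex.ofReal_re] at this
      linarith
    have hre_pos : ∀ w : ℂ, 0 ≤ w.re → 0 < (((δ : ℂ) + w)⁻¹).re := by
      intro w hw
      rw [Complex.inv_re]
      have h1 : 0 < ((δ : ℂ) + w).re := by
        simp only [Complex.add_re, Complex.ofReal_re]; linarith
      have h2 : 0 < Complex.normSq ((δ : ℂ) + w) := by
        rw [Complex.normSq_pos]; exact hne w (by linarith)
      positivity
    have hdf : DifferentiableOn ℂ f {w : ℂ | -δ < w.re} := by
      apply DifferentiableOn.mul
      · apply DifferentiableOn.comp hd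
        · exact (differentiableOn_const _ |>.add differentiableOn_id).inv (fun w hw => hne w hw)
        · intro w hw
          simp only [Set.mem_setOf_eq] at hw ⊢
          rw [Complex.inv_re]
          have h1 : 0 < ((δ : ℂ) + w).re := by
            simp only [Complex.add_re, Complex.ofReal_re]; linarith
          have h2 : 0 < Complex.normSq ((δ : ℂ) + w) := by
            rw [Complex.normSq_pos]; exact hne w hw
          positivity
      · exact (((differentiableOn_const _).add differentiableOn_id).const_mul _).cexp
    have hsub : closure {w : ℂ | 0 < w.re} ⊆ {w : ℂ | -δ < w.re} := by
      have h1 : closure {w : ℂ | 0 < w.re} ⊆ {w : ℂ | 0 ≤ w.re} :=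
        closure_minimal (fun w hw => (le_of_lt hw : (0:ℝ) ≤ w.re)) (isClosed_le continuous_const Complex.continuous_re)
      intro w hw
      have := h1 hw
      simp only [Set.mem_setOf_eq] at this ⊢
      linarith
    have hdcc : DiffContOnCl ℂ f {w : ℂ | 0 < w.re} := by
      constructor
      · refine hdf.mono ?_
        intro w hw
        simp only [Set.mem_setOf_eq] at hw ⊢
        linarith
      · exact (hdf.continuousOn).mono hsub
    have hbound : ∀ w : ℂ, 0 ≤ w.re → ‖f w‖ ≤ Real.exp (γ * δ) * Real.exp (γ * w.re) := by
      intro w hw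
      have h1 : ‖F (((δ : ℂ) + w)⁻¹)‖ ≤ 1 := hb _ (hre_pos w hw)
      have h2 : ‖Complex.exp ((γ : ℂ) * ((δ : ℂ) + w))‖ = Real.exp (γ * δ + γ * w.re) := by
        rw [Complex.norm_exp]
        congr 1
        simp [Complex.mul_re, Complex.add_re, Complex.add_im, mul_add]
      calc ‖f w‖ = ‖F (((δ:ℂ)+w)⁻¹)‖ * ‖Complex.exp ((γ:ℂ) * ((δ:ℂ)+w))‖ := norm_mul _ _
        _ ≤ 1 * Real.exp (γ * δ + γ * w.re) := by
            rw [h2]; exact mul_le_mul_of_nonneg_right h1 (Real.exp_nonneg _)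
        _ = Real.exp (γ * δ) * Real.exp (γ * w.re) := by rw [one_mul, Real.exp_add]
    have hPL : ∀ w : ℂ, 0 ≤ w.re → ‖f w‖ ≤ Real.exp (γ * δ) := by
      intro w hw
      apply PhragmenLindelof.right_half_plane_of_bounded_on_real hdcc ?_ ?_ ?_ hw
      · -- growth
        refine ⟨1, one_lt_two, γ, ?_⟩
        rw [Asymptotics.isBigO_iff]
        refine ⟨Real.exp (γ * δ), ?_⟩
        rw [Filter.eventually_inf_principal]
        refine Filter.Eventually.of_forall ?_
        intro w hw
        simp only [Set.mem_setOf_eq] at hw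
        have hb1 := hbound w hw.le
        simp only [Real.norm_eq_abs, Real.abs_exp]
        refine hb1.trans ?_
        have hle : γ * w.re ≤ γ * ‖w‖ ^ (1:ℝ) := by
          rw [Real.rpow_one]; exact mul_le_mul_of_nonneg_left (Complex.re_le_norm w) hγ.le
        exact mul_le_mul_of_nonneg_left (Real.exp_le_exp.2 hle) (Real.exp_nonneg _)
      · -- bounded on real axis
        refine ⟨C₀, ?_⟩
        rw [Filter.eventually_map]
        filter_upwards [Filter.eventually_ge_atTop 0] with x hx
        have hpos : 0 < δ + x := by linarith
        have hinv : (((δ : ℂ) + (x : ℂ))⁻¹) = (((δ + x)⁻¹ : ℝ) : ℂ) := by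
          push_cast; ring
        have ht' : 0 < (δ + x)⁻¹ := by positivity
        have hF := hr _ ht'
        have hexpv : ‖Complex.exp ((γ : ℂ) * ((δ : ℂ) + (x : ℂ)))‖ = Real.exp (γ * (δ + x)) := by
          rw [Complex.norm_exp]
          congr 1
          simp [Complex.mul_re, Complex.add_re]
        have : ‖f (x : ℂ)‖ = ‖F ((((δ + x)⁻¹ : ℝ)) : ℂ)‖ * Real.exp (γ * (δ + x)) := by
          rw [hf]
          simp only [norm_mul]
          rw [hinv, hexpv]
        rw [this]
        have hdiv : -γ / (δ + x)⁻¹ = -(γ * (δ + x)) := by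
          field_simp
        calc ‖F ((((δ + x)⁻¹ : ℝ)) : ℂ)‖ * Real.exp (γ * (δ + x))
            ≤ (C₀ * Real.exp (-γ / (δ + x)⁻¹)) * Real.exp (γ * (δ + x)) := by
              exact mul_le_mul_of_nonneg_right hF (Real.exp_nonneg _)
          _ = C₀ := by
              rw [hdiv, mul_assoc, ← Real.exp_add]
              simp
      · -- imaginary axis
        intro x
        have := hbound ((x : ℂ) * Complex.I) (by simp)
        simpa using this
    -- apply at the real point 1/t - δ
    have hge : (0:ℝ) ≤ 1 / t - δ := by linarith
    have happ := hPL (((1 / t - δ : ℝ)) : ℂ) (by rw [Complex.ofReal_re]; linarith)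
    have heq : f (((1 / t - δ : ℝ)) : ℂ) = F (t : ℂ) * Complex.exp ((γ : ℂ) * ((1/t : ℝ) : ℂ)) := by
      simp only [hf]
      have h1 : (δ : ℂ) + ((1 / t - δ : ℝ) : ℂ) = ((1/t : ℝ) : ℂ) := by push_cast; ring
      rw [h1]
      congr 2
      rw [← Complex.ofReal_inv, one_div, inv_inv]
    rw [heq] at happ
    have hnorm : ‖F (t : ℂ) * Complex.exp ((γ : ℂ) * ((1/t : ℝ) : ℂ))‖
        = ‖F (t : ℂ)‖ * Real.exp (γ / t) := by
      rw [norm_mul]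
      congr 1
      rw [Complex.norm_exp]
      congr 1
      simp [Complex.mul_re, Complex.ofReal_re, Complex.ofReal_im]
      ring
    rw [hnorm] at happ
    exact happ
  -- take δ → 0⁺
  have hlim : Tendsto (fun δ : ℝ => Real.exp (γ * δ)) (nhdsWithin 0 (Set.Ioi 0)) (nhds 1) := by
    have hc : Continuous (fun δ : ℝ => Real.exp (γ * δ)) :=
      Real.continuous_exp.comp (continuous_const.mul continuous_id)
    have h0 : Tendsto (fun δ : ℝ => Real.exp (γ * δ)) (nhds 0) (nhds 1) := by
      have := hc.tendsto (0:ℝ)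
      simpa using this
    exact h0.mono_left nhdsWithin_le_nhds
  have hfin : ‖F (t : ℂ)‖ * Real.exp (γ / t) ≤ 1 := by
    have hIoc : Set.Ioc (0:ℝ) (1/t) ∈ nhdsWithin (0:ℝ) (Set.Ioi 0) :=
      Ioc_mem_nhdsGT_of_mem ⟨le_refl (0:ℝ), by positivity⟩
    refine ge_of_tendsto hlim ?_
    filter_upwards [hIoc] with δ hδ
    exact key δ hδ.1 hδ.2
  have h2 : Real.exp (-γ / t) = (Real.exp (γ / t))⁻¹ := by
    rw [← Real.exp_neg]; congr 1; ring
  calc ‖F (t : ℂ)‖ = ‖F (t : ℂ)‖ * Real.exp (γ / t) * (Real.exp (γ/t))⁻¹ := by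
        field_simp
    _ ≤ 1 * (Real.exp (γ/t))⁻¹ := mul_le_mul_of_nonneg_right hfin (by positivity)
    _ = Real.exp (-γ / t) := by rw [one_mul, h2]

/-- remove the `e^{at}` factor -/
lemma scalarPL2 {F : ℂ → ℂ} {γ C a : ℝ} (hγ : 0 < γ) (hC : 1 ≤ C) (ha : 0 < a)
    (hd : DifferentiableOn ℂ F {z : ℂ | 0 < z.re})
    (hb : ∀ z : ℂ, 0 < z.re → ‖F z‖ ≤ 1)
    (hr : ∀ t : ℝ, 0 < t → ‖F (t : ℂ)‖ ≤ C * Real.exp (a * t) * Real.exp (-γ / t)) :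
    ∀ t : ℝ, 0 < t → ‖F (t : ℂ)‖ ≤ Real.exp (-γ / t) := by
  have hC0 : ∀ t : ℝ, 0 < t → ‖F (t : ℂ)‖ ≤ (C * Real.exp a + Real.exp γ) * Real.exp (-γ / t) := by
    intro t ht
    rcases le_or_gt t 1 with h1 | h1
    · refine (hr t ht).trans ?_
      have e1 : Real.exp (a * t) ≤ Real.exp a := by
        rw [Real.exp_le_exp]; nlinarith
      have : C * Real.exp (a * t) ≤ C * Real.exp a + Real.exp γ := by
        nlinarith [Real.exp_pos γ, Real.exp_pos (a*t), Real.exp_pos a]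
      exact mul_le_mul_of_nonneg_right this (Real.exp_nonneg _)
    · have h2 : ‖F (t : ℂ)‖ ≤ 1 := hb _ (by rw [Complex.ofReal_re]; exact ht)
      refine h2.trans ?_
      have e2 : 1 ≤ Real.exp γ * Real.exp (-γ / t) := by
        rw [← Real.exp_add, ← Real.exp_zero, Real.exp_le_exp]
        have : γ / t ≤ γ := by
          rw [div_le_iff₀ ht]; nlinarith
        have : -γ/t = -(γ/t) := by ring
        rw [this]; linarith [div_le_iff₀ (ht) |>.mpr (by nlinarith : γ ≤ γ * t)]
      calc (1:ℝ) ≤ Real.exp γ * Real.exp (-γ / t) := e2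
        _ ≤ (C * Real.exp a + Real.exp γ) * Real.exp (-γ / t) := by
            have : 0 ≤ C * Real.exp a := by positivity
            nlinarith [Real.exp_nonneg (-γ/t)]
  exact scalarPL hγ hd hb hC0

end ScalarPL

open Complex Filter in
/-- Self-improvement of Davies–Gaffney estimates. -/
theorem davies_gaffney_self_improvement
    {M : Type*} [MetricSpace M] [TopologicalSpace.SeparableSpace M]
    [MeasurableSpace M] [BorelSpace M] (μ : Measure M)
    (Ψ : ℂ → (Lp ℂ 2 μ →L[ℂ] Lp ℂ 2 μ))
    (C a : ℝ) (hC : 1 ≤ C) (ha : 0 < a)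
    (hΨanal : DifferentiableOn ℂ Ψ {z : ℂ | 0 < z.re})
    (hΨcontr : ∀ z : ℂ, 0 < z.re → ‖Ψ z‖ ≤ 1)
    (hweak : ∀ (x₁ x₂ : M) (r₁ r₂ : ℝ) (f₁ f₂ : Lp ℂ 2 μ),
      (∀ᵐ x ∂μ, x ∉ Metric.ball x₁ r₁ → f₁ x = 0) →
      (∀ᵐ x ∂μ, x ∉ Metric.ball x₂ r₂ → f₂ x = 0) →
      ∀ t : ℝ, 0 < t →
        ‖(inner ℂ (Ψ (t : ℂ) f₁) f₂ : ℂ)‖ ≤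
          C * Real.exp (a * t) *
            Real.exp (-(setDist (Metric.ball x₁ r₁) (Metric.ball x₂ r₂)) ^ 2 / (4 * t)) *
            ‖f₁‖ * ‖f₂‖) :
    ∀ (x₁ x₂ : M) (r₁ r₂ : ℝ) (f₁ f₂ : Lp ℂ 2 μ),
      (∀ᵐ x ∂μ, x ∉ Metric.ball x₁ r₁ → f₁ x = 0) →
      (∀ᵐ x ∂μ, x ∉ Metric.ball x₂ r₂ → f₂ x = 0) →
      ∀ t : ℝ, 0 < t →
        ‖(inner ℂ (Ψ (t : ℂ) f₁) f₂ : ℂ)‖ ≤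
          Real.exp (-(setDist (Metric.ball x₁ r₁) (Metric.ball x₂ r₂)) ^ 2 / (4 * t)) *
            ‖f₁‖ * ‖f₂‖ := by
  intro x₁ x₂ r₁ r₂ f₁ f₂ h₁ h₂ t ht
  set r : ℝ := setDist (Metric.ball x₁ r₁) (Metric.ball x₂ r₂) with hrdef
  -- basic contraction bound
  have hcs : ∀ z : ℂ, 0 < z.re → ‖(inner ℂ f₂ (Ψ z f₁) : ℂ)‖ ≤ ‖f₁‖ * ‖f₂‖ := by
    intro z hz
    calc ‖(inner ℂ f₂ (Ψ z f₁) : ℂ)‖ ≤ ‖f₂‖ * ‖Ψ z f₁‖ := norm_inner_le_norm _ _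
      _ ≤ ‖f₂‖ * (‖Ψ z‖ * ‖f₁‖) :=
          mul_le_mul_of_nonneg_left ((Ψ z).le_opNorm f₁) (norm_nonneg _)
      _ ≤ ‖f₂‖ * (1 * ‖f₁‖) := by
          gcongr
          exact hΨcontr z hz
      _ = ‖f₁‖ * ‖f₂‖ := by ring
  have hsymm : ∀ z : ℂ, ‖(inner ℂ (Ψ z f₁) f₂ : ℂ)‖ = ‖(inner ℂ f₂ (Ψ z f₁) : ℂ)‖ := by
    intro z; exact norm_inner_symm _ _
  have htre : (0:ℝ) < ((t : ℂ)).re := by rw [Complex.ofReal_re]; exact ht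
  -- trivial case: γ = 0
  rcases eq_or_lt_of_le (sq_nonneg r) with hr0 | hrpos
  · -- r^2 = 0
    rw [hsymm]
    have : -r ^ 2 / (4 * t) = 0 := by rw [← hr0]; simp
    rw [this, Real.exp_zero, one_mul]
    exact hcs _ htre
  · -- r^2 > 0
    set γ : ℝ := r ^ 2 / 4 with hγdef
    have hγ : 0 < γ := by positivity
    have hexp_eq : ∀ s : ℝ, 0 < s → -r ^ 2 / (4 * s) = -γ / s := by
      intro s hs; rw [hγdef]; field_simp
    set N : ℝ := ‖f₁‖ * ‖f₂‖ with hNdef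
    have hN0 : 0 ≤ N := by positivity
    rcases eq_or_lt_of_le hN0 with hN | hN
    · -- N = 0
      rw [hsymm]
      have h1 : ‖(inner ℂ f₂ (Ψ (t:ℂ) f₁) : ℂ)‖ ≤ 0 := by
        rw [hN]; exact hcs _ htre
      have h2 : (0:ℝ) ≤ Real.exp (-r ^ 2 / (4 * t)) * ‖f₁‖ * ‖f₂‖ := by positivity
      calc ‖(inner ℂ f₂ (Ψ (t:ℂ) f₁) : ℂ)‖ ≤ 0 := h1
        _ ≤ _ := h2
    · -- N > 0
      set F : ℂ → ℂ := fun z => (inner ℂ f₂ (Ψ z f₁) : ℂ) / (N : ℂ) with hFdef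
      have hdF : DifferentiableOn ℂ F {z : ℂ | 0 < z.re} := by
        have h1 : DifferentiableOn ℂ (fun z => Ψ z f₁) {z : ℂ | 0 < z.re} :=
          (ContinuousLinearMap.apply ℂ (Lp ℂ 2 μ) f₁).differentiable.comp_differentiableOn hΨanal
        have h2 : DifferentiableOn ℂ (fun z => (inner ℂ f₂ (Ψ z f₁) : ℂ)) {z : ℂ | 0 < z.re} :=
          (innerSL ℂ f₂).differentiable.comp_differentiableOn h1
        exact h2.div_const _
      have hnormF : ∀ z : ℂ, ‖F z‖ = ‖(inner ℂ f₂ (Ψ z f₁) : ℂ)‖ / N := by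
        intro z
        rw [hFdef]
        simp only [norm_div, Complex.norm_real, Real.norm_eq_abs, abs_of_pos hN]
      have hbF : ∀ z : ℂ, 0 < z.re → ‖F z‖ ≤ 1 := by
        intro z hz
        rw [hnormF, div_le_one hN]
        exact hcs z hz
      have hrF : ∀ s : ℝ, 0 < s → ‖F (s : ℂ)‖ ≤ C * Real.exp (a * s) * Real.exp (-γ / s) := by
        intro s hs
        rw [hnormF, div_le_iff₀ hN]
        have hw := hweak x₁ x₂ r₁ r₂ f₁ f₂ h₁ h₂ s hs
        rw [hsymm] at hw
        calc ‖(inner ℂ f₂ (Ψ (s:ℂ) f₁) : ℂ)‖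
            ≤ C * Real.exp (a * s) * Real.exp (-r ^ 2 / (4 * s)) * ‖f₁‖ * ‖f₂‖ := hw
          _ = C * Real.exp (a * s) * Real.exp (-γ / s) * N := by
              rw [hexp_eq s hs, hNdef]; ring
      have hfin := scalarPL2 hγ hC ha hdF hbF hrF t ht
      rw [hnormF, div_le_iff₀ hN] at hfin
      rw [hsymm]
      calc ‖(inner ℂ f₂ (Ψ (t:ℂ) f₁) : ℂ)‖ ≤ Real.exp (-γ / t) * N := hfin
        _ = Real.exp (-r ^ 2 / (4 * t)) * ‖f₁‖ * ‖f₂‖ := by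
            rw [hexp_eq t ht, hNdef]; ring
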